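/- arXiv:1901.07921 — 3 statements merged into one kernel-verified Lean document; each statement's English description precedes it below -/
import Mathlib

section
/- Let u: R → U be an injective ring epimorphism of commutative rings. Then Ext^1_R(U/R, U) = 0 and Hom_R(U/R, U) = 0 when U is flat as an R-module; consequently the connecting map Hom_R(U/R, U/R) → Ext^1_R(U/R, R) is an isomorphism. -/
universe u

noncomputable section

/-- The first Ext group of two `R`-modules. -/
abbrev ext1 (R : Type u) [CommRing R] (X Y : ModuleCat.{u} R) : Type u :=
  ((Ext R (ModuleCat.{u} R) 1).obj (Opposite.op X)).obj Y

open CategoryTheory TensorProduct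

lemma subsingleton_of_isZero {R : Type u} [CommRing R] {M : ModuleCat.{u} R}
    (h : CategoryTheory.Limits.IsZero M) : Subsingleton M := by
  constructor
  intro a b
  have h0 : (𝟙 M) = 0 := h.eq_of_src _ _
  calc a = (𝟙 M) a := rfl
    _ = (0 : M ⟶ M) a := by rw [h0]
    _ = (𝟙 M) b := by rw [h0]; rfl
    _ = b := rfl

section Core
variable {R : Type u} [CommRing R] {U : Type u} [CommRing U] [Algebra R U]

lemma key1 (hepi : Function.Bijective (LinearMap.mul' R U)) (x : U) :
    (x ⊗ₜ[R] (1:U) : U ⊗[R] U) = 1 ⊗ₜ x := by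
  apply hepi.injective
  simp [LinearMap.mul'_apply]

lemma key2 (hepi : Function.Bijective (LinearMap.mul' R U)) (x y : U) :
    (y ⊗ₜ[R] x : U ⊗[R] U) = (y * x) ⊗ₜ 1 := by
  have := congrArg (LinearMap.rTensor U (LinearMap.mulLeft R y)) (key1 hepi x)
  simpa using this.symm

lemma smul_form (hepi : Function.Bijective (LinearMap.mul' R U)) (g : U →ₗ[R] U) (x : U) :
    g x = x * g 1 := by
  have := congrArg (TensorProduct.lift ((LinearMap.mul R U).compl₂ g)) (key1 hepi x)
  simpa using this.symm

lemma homKU (hepi : Function.Bijective (LinearMap.mul' R U))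
    (f : (U ⧸ LinearMap.range (Algebra.linearMap R U)) →ₗ[R] U) : f = 0 := by
  set g : U →ₗ[R] U := f ∘ₗ (LinearMap.range (Algebra.linearMap R U)).mkQ with hg
  have h1 : g 1 = 0 := by
    have : ((LinearMap.range (Algebra.linearMap R U)).mkQ) (1 : U) = 0 := by
      rw [Submodule.mkQ_apply, Submodule.Quotient.mk_eq_zero]
      exact ⟨1, by simp⟩
    simp [hg, this]
  have hz : ∀ x : U, g x = 0 := fun x => by rw [smul_form hepi g x, h1, mul_zero]
  ext k
  simpa [hg] using hz k

lemma subsingletonUK (hepi : Function.Bijective (LinearMap.mul' R U)) :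
    Subsingleton (U ⊗[R] (U ⧸ LinearMap.range (Algebra.linearMap R U))) := by
  constructor
  suffices h : ∀ z : U ⊗[R] (U ⧸ LinearMap.range (Algebra.linearMap R U)), z = 0 by
    intro a b; rw [h a, h b]
  intro z
  induction z using TensorProduct.induction_on with
  | zero => rfl
  | tmul y k =>
      obtain ⟨x, rfl⟩ := Submodule.mkQ_surjective (LinearMap.range (Algebra.linearMap R U)) k
      have e1 : y ⊗ₜ[R] ((LinearMap.range (Algebra.linearMap R U)).mkQ x)
          = LinearMap.lTensor U ((LinearMap.range (Algebra.linearMap R U)).mkQ) (y ⊗ₜ x) := by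
        simp
      rw [e1, key2 hepi x y]
      have : ((LinearMap.range (Algebra.linearMap R U)).mkQ) (1 : U) = 0 := by
        rw [Submodule.mkQ_apply, Submodule.Quotient.mk_eq_zero]
        exact ⟨1, by simp⟩
      simp [this]
  | add a b ha hb => rw [ha, hb, add_zero]

end Core

section Helpers
variable {R : Type u} [CommRing R]

/-- Factor a linear map through a surjection whose kernel it kills. -/
lemma factor_through_surj {M N Q : Type u} [AddCommGroup M] [Module R M]
    [AddCommGroup N] [Module R N] [AddCommGroup Q] [Module R Q]
    (p : M →ₗ[R] N) (hp : Function.Surjective p) (θ : M →ₗ[R] Q)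
    (hker : LinearMap.ker p ≤ LinearMap.ker θ) :
    ∃ h : N →ₗ[R] Q, h ∘ₗ p = θ := by
  let e := LinearMap.quotKerEquivOfSurjective p hp
  let θ' := (LinearMap.ker p).liftQ θ hker
  refine ⟨θ' ∘ₗ (e.symm : N →ₗ[R] M ⧸ LinearMap.ker p), ?_⟩
  ext m
  have h1 : e (Submodule.Quotient.mk m) = p m := rfl
  have h2 : e.symm (p m) = Submodule.Quotient.mk m := by
    apply e.injective; rw [e.apply_symm_apply, h1]
  simp only [LinearMap.comp_apply, LinearEquiv.coe_coe, h2]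
  exact Submodule.liftQ_apply _ _ _

end Helpers

section Extend
variable {R : Type u} [CommRing R] {U : Type u} [CommRing U] [Algebra R U] [Module.Flat R U]

/-- Chain-level vanishing of `Ext¹(K, U)`. -/
lemma extend_lemma (hepi : Function.Bijective (LinearMap.mul' R U))
    {A B C' : Type u} [AddCommGroup A] [Module R A] [AddCommGroup B] [Module R B]
    [AddCommGroup C'] [Module R C']
    (d2 : A →ₗ[R] B) (d1 : B →ₗ[R] C')
    (ε : C' →ₗ[R] (U ⧸ LinearMap.range (Algebra.linearMap R U)))
    (hex1 : Function.Exact d2 d1) (hex0 : Function.Exact d1 ε) (hεs : Function.Surjective ε)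
    (f : B →ₗ[R] U) (hf : f ∘ₗ d2 = 0) :
    ∃ g : C' →ₗ[R] U, g ∘ₗ d1 = f := by
  classical
  -- tensored maps
  set d1T := LinearMap.lTensor U d1 with hd1T
  -- d1T is surjective
  have hsurj : Function.Surjective d1T := by
    have hexT : Function.Exact d1T (LinearMap.lTensor U ε) :=
      lTensor_exact U hex0 hεs
    intro z
    have hz : LinearMap.lTensor U ε z = 0 := by
      have h := subsingletonUK (R := R) (U := U) hepi
      exact @Subsingleton.elim _ h _ _
    exact (hexT z).1 hz
  -- exactness of tensored complex at B by flatness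
  have hexT1 : Function.Exact (LinearMap.lTensor U d2) d1T :=
    Module.Flat.lTensor_exact U hex1
  -- the map F
  set F : U ⊗[R] B →ₗ[R] U := TensorProduct.lift ((LinearMap.mul R U).compl₂ f) with hF
  have hFd2 : F ∘ₗ LinearMap.lTensor U d2 = 0 := by
    ext x a
    have : f (d2 a) = 0 := LinearMap.congr_fun hf a
    simp [hF, this]
  have hker : LinearMap.ker d1T ≤ LinearMap.ker F := by
    intro z hz
    rw [LinearMap.mem_ker] at hz ⊢
    obtain ⟨w, rfl⟩ := (hexT1 z).1 hz
    exact LinearMap.congr_fun hFd2 w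
  obtain ⟨G, hG⟩ := factor_through_surj d1T hsurj F hker
  refine ⟨G ∘ₗ (TensorProduct.mk R U C') 1, ?_⟩
  ext b
  have h1 : (1 : U) ⊗ₜ[R] d1 b = d1T ((1 : U) ⊗ₜ b) := by simp [hd1T]
  simp only [LinearMap.comp_apply, TensorProduct.mk_apply, h1]
  rw [← LinearMap.comp_apply G d1T, hG]
  simp [hF]
end Extend

section
variable {R : Type u} [CommRing R] {U : Type u} [CommRing U] [Algebra R U] [Module.Flat R U]

/-- Factor a map to `U` whose image lies in the image of `R` through `R`. -/
lemma factor_range (hinj : Function.Injective (algebraMap R U))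
    {M : Type u} [AddCommGroup M] [Module R M] (θ : M →ₗ[R] U)
    (h : ∀ x, θ x ∈ LinearMap.range (Algebra.linearMap R U)) :
    ∃ c : M →ₗ[R] R, (Algebra.linearMap R U) ∘ₗ c = θ := by
  have hinj' : Function.Injective (Algebra.linearMap R U) := hinj
  let e0 := LinearEquiv.ofInjective (Algebra.linearMap R U) hinj'
  refine ⟨e0.symm.toLinearMap ∘ₗ LinearMap.codRestrict _ θ h, ?_⟩
  ext x
  have h2 := congrArg Subtype.val (e0.apply_symm_apply ⟨θ x, h x⟩)
  rwa [LinearEquiv.ofInjective_apply] at h2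
end

section
variable {R : Type u} [CommRing R] {U : Type u} [CommRing U] [Algebra R U] [Module.Flat R U]

instance kerDualAddCommGroup {R : Type u} [CommRing R] {X1 X2 : Type u} [AddCommGroup X1]
    [Module R X1] [AddCommGroup X2] [Module R X2] (g2 : (X1 →ₗ[R] R) →ₗ[R] (X2 →ₗ[R] R)) :
    AddCommGroup (LinearMap.ker g2) :=
  Submodule.addCommGroup _

lemma transport_dual {X0 X1 X2 D0 D1 D2 : Type u} [AddCommGroup X0] [Module R X0]
    [AddCommGroup X1] [Module R X1] [AddCommGroup X2] [Module R X2]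
    [AddCommGroup D0] [Module R D0] [AddCommGroup D1] [Module R D1]
    [AddCommGroup D2] [Module R D2]
    (d2 : X2 →ₗ[R] X1) (d1 : X1 →ₗ[R] X0)
    (g2' : D1 →ₗ[R] D2) (tc' : D0 →ₗ[R] LinearMap.ker g2')
    (e0 : D0 ≃ₗ[R] (X0 →ₗ[R] R)) (e1 : D1 ≃ₗ[R] (X1 →ₗ[R] R)) (e2 : D2 ≃ₗ[R] (X2 →ₗ[R] R))
    (hg : ∀ φ, e2 (g2' φ) = e1 φ ∘ₗ d2) (ht : ∀ ψ, e1 (tc' ψ : D1) = e0 ψ ∘ₗ d1) :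
    ∃ (g2 : (X1 →ₗ[R] R) →ₗ[R] (X2 →ₗ[R] R)) (tc : (X0 →ₗ[R] R) →ₗ[R] LinearMap.ker g2),
      (∀ χ, g2 χ = χ ∘ₗ d2) ∧ (∀ c, ((tc c : LinearMap.ker g2) : X1 →ₗ[R] R) = c ∘ₗ d1) ∧
      Nonempty ((LinearMap.ker g2 ⧸ LinearMap.range tc) ≃ₗ[R]
        (LinearMap.ker g2' ⧸ LinearMap.range tc')) := by
  let g2 : (X1 →ₗ[R] R) →ₗ[R] (X2 →ₗ[R] R) :=
    e2.toLinearMap ∘ₗ g2' ∘ₗ e1.symm.toLinearMap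
  have hK : (LinearMap.ker g2').map (e1 : D1 →ₗ[R] (X1 →ₗ[R] R)) = LinearMap.ker g2 := by
    rw [Submodule.map_equiv_eq_comap_symm]
    ext χ
    simp [g2, LinearMap.mem_ker]
  let kE : LinearMap.ker g2' ≃ₗ[R] LinearMap.ker g2 := e1.ofSubmodules _ _ hK
  let tc : (X0 →ₗ[R] R) →ₗ[R] LinearMap.ker g2 :=
    kE.toLinearMap ∘ₗ tc' ∘ₗ e0.symm.toLinearMap
  refine ⟨g2, tc, fun χ => ?_, fun c => ?_, ⟨Submodule.Quotient.equiv _ _ kE.symm ?_⟩⟩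
  · simp [g2, hg]
  · simp [tc, kE, ht]
  · have : (kE.symm : LinearMap.ker g2 →ₗ[R] LinearMap.ker g2') ∘ₗ tc = tc' ∘ₗ e0.symm.toLinearMap := by
      ext c; simp [tc]
    rw [← LinearMap.range_comp, this, LinearMap.range_comp, LinearEquiv.range, Submodule.map_top]

lemma connecting (hinj : Function.Injective (algebraMap R U))
    (hepi : Function.Bijective (LinearMap.mul' R U))
    {X0 X1 X2 : Type u} [AddCommGroup X0] [Module R X0] [AddCommGroup X1] [Module R X1]
    [AddCommGroup X2] [Module R X2] [Module.Projective R X0]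
    (d2 : X2 →ₗ[R] X1) (d1 : X1 →ₗ[R] X0)
    (ε : X0 →ₗ[R] (U ⧸ LinearMap.range (Algebra.linearMap R U)))
    (hex1 : Function.Exact d2 d1) (hex0 : Function.Exact d1 ε)
    (hεs : Function.Surjective ε)
    (g2 : (X1 →ₗ[R] R) →ₗ[R] (X2 →ₗ[R] R))
    (tc : (X0 →ₗ[R] R) →ₗ[R] LinearMap.ker g2)
    (hg2 : ∀ χ, g2 χ = χ ∘ₗ d2)
    (htc : ∀ c, ((tc c : LinearMap.ker g2) : X1 →ₗ[R] R) = c ∘ₗ d1) :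
    Nonempty (((U ⧸ LinearMap.range (Algebra.linearMap R U)) →ₗ[R]
        (U ⧸ LinearMap.range (Algebra.linearMap R U))) ≃ₗ[R]
      (LinearMap.ker g2 ⧸ LinearMap.range tc)) := by
  classical
  let uR : R →ₗ[R] U := Algebra.linearMap R U
  let π : U →ₗ[R] (U ⧸ LinearMap.range (Algebra.linearMap R U)) :=
    (LinearMap.range (Algebra.linearMap R U)).mkQ
  have huinj : Function.Injective uR := hinj
  have hπu : ∀ r, π (uR r) = 0 := fun r => by
    show (LinearMap.range (Algebra.linearMap R U)).mkQ _ = 0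
    rw [Submodule.mkQ_apply, Submodule.Quotient.mk_eq_zero]
    exact ⟨r, rfl⟩
  have hπker : ∀ x, π x = 0 → x ∈ LinearMap.range uR := fun x h =>
    (Submodule.Quotient.mk_eq_zero _).1 h
  have hεd1 : ∀ b, ε (d1 b) = 0 := fun b => (hex0 (d1 b)).2 ⟨b, rfl⟩
  have hd12 : ∀ a, d1 (d2 a) = 0 := fun a => (hex1 (d2 a)).2 ⟨a, rfl⟩
  -- the connecting relation
  set Rel : ((U ⧸ LinearMap.range (Algebra.linearMap R U)) →ₗ[R]
      (U ⧸ LinearMap.range (Algebra.linearMap R U))) →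
      (LinearMap.ker g2 ⧸ LinearMap.range tc) → Prop := fun φ h =>
    ∃ (ψ : X0 →ₗ[R] U) (χ : X1 →ₗ[R] R)
    (hχ : χ ∈ LinearMap.ker g2), π ∘ₗ ψ = φ ∘ₗ ε ∧ uR ∘ₗ χ = ψ ∘ₗ d1 ∧
      h = (LinearMap.range tc).mkQ ⟨χ, hχ⟩ with hRel
  -- totality
  have total : ∀ φ, ∃ h, Rel φ h := by
    intro φ
    obtain ⟨ψ, hψ⟩ := Module.projective_lifting_property π (φ ∘ₗ ε) (Submodule.mkQ_surjective _)
    have hmem : ∀ b, ψ (d1 b) ∈ LinearMap.range uR := by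
      intro b
      apply hπker
      have : π (ψ (d1 b)) = φ (ε (d1 b)) := LinearMap.congr_fun hψ (d1 b)
      rw [this, hεd1, map_zero]
    obtain ⟨χ, hχu⟩ := factor_range hinj (ψ ∘ₗ d1) hmem
    have hχker : χ ∈ LinearMap.ker g2 := by
      rw [LinearMap.mem_ker, hg2]
      ext a
      apply huinj
      have : uR (χ (d2 a)) = ψ (d1 (d2 a)) := LinearMap.congr_fun hχu (d2 a)
      simp [this, hd12]
    exact ⟨_, ψ, χ, hχker, hψ, hχu, rfl⟩
  -- independence / functionality
  have uniq : ∀ φ h h', Rel φ h → Rel φ h' → h = h' := by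
    rintro φ h h' ⟨ψ, χ, hχ, hψ, hu, rfl⟩ ⟨ψ', χ', hχ', hψ', hu', rfl⟩
    have hmem : ∀ x, (ψ - ψ') x ∈ LinearMap.range uR := by
      intro x
      apply hπker
      have e1 : π (ψ x) = φ (ε x) := LinearMap.congr_fun hψ x
      have e2 : π (ψ' x) = φ (ε x) := LinearMap.congr_fun hψ' x
      simp [map_sub, e1, e2]
    obtain ⟨c, hc⟩ := factor_range hinj (ψ - ψ') hmem
    have hcd : tc c = ⟨χ - χ', sub_mem hχ hχ'⟩ := by
      apply Subtype.ext
      rw [htc]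
      ext b
      apply huinj
      have e1 : uR (c (d1 b)) = (ψ - ψ') (d1 b) := LinearMap.congr_fun hc (d1 b)
      have e2 : uR (χ b) = ψ (d1 b) := LinearMap.congr_fun hu b
      have e3 : uR (χ' b) = ψ' (d1 b) := LinearMap.congr_fun hu' b
      simp only [LinearMap.comp_apply, LinearMap.sub_apply] at e1 e2 e3 ⊢
      rw [e1, map_sub, e2, e3]
    rw [Submodule.mkQ_apply, Submodule.mkQ_apply, Submodule.Quotient.eq]
    exact ⟨c, by rw [hcd]; exact Subtype.ext rfl⟩
  -- additivity
  have addRel : ∀ φ φ' h h', Rel φ h → Rel φ' h' → Rel (φ + φ') (h + h') := by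
    rintro φ φ' h h' ⟨ψ, χ, hχ, hψ, hu, rfl⟩ ⟨ψ', χ', hχ', hψ', hu', rfl⟩
    refine ⟨ψ + ψ', χ + χ', add_mem hχ hχ', ?_, ?_, ?_⟩
    · rw [LinearMap.comp_add, LinearMap.add_comp, hψ, hψ']
    · rw [LinearMap.comp_add, LinearMap.add_comp, hu, hu']
    · rw [← map_add]; rfl
  have smulRel : ∀ (r : R) φ h, Rel φ h → Rel (r • φ) (r • h) := by
    rintro r φ h ⟨ψ, χ, hχ, hψ, hu, rfl⟩
    refine ⟨r • ψ, r • χ, Submodule.smul_mem _ r hχ, ?_, ?_, ?_⟩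
    · rw [LinearMap.comp_smul, LinearMap.smul_comp, hψ]
    · rw [LinearMap.comp_smul, LinearMap.smul_comp, hu]
    · rw [← map_smul]; rfl
  -- injectivity
  have injRel : ∀ φ, Rel φ 0 → φ = 0 := by
    rintro φ ⟨ψ, χ, hχ, hψ, hu, h0⟩
    have : (⟨χ, hχ⟩ : LinearMap.ker g2) ∈ LinearMap.range tc := by
      rw [← Submodule.Quotient.mk_eq_zero]
      exact h0.symm
    obtain ⟨c, hc⟩ := this
    have hcd1 : c ∘ₗ d1 = χ := by
      have := congrArg Subtype.val hc
      rwa [htc] at this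
    set θ : X0 →ₗ[R] U := ψ - uR ∘ₗ c with hθ
    have hθd1 : ∀ b, θ (d1 b) = 0 := by
      intro b
      have e1 : uR (χ b) = ψ (d1 b) := LinearMap.congr_fun hu b
      have e2 : c (d1 b) = χ b := LinearMap.congr_fun hcd1 b
      simp [hθ, e2, e1]
    obtain ⟨hmap, hh⟩ := factor_through_surj ε hεs θ (by
      intro x hx
      rw [LinearMap.mem_ker] at hx ⊢
      obtain ⟨b, rfl⟩ := (hex0 x).1 hx
      exact hθd1 b)
    have : hmap = 0 := homKU hepi hmap
    have hθ0 : θ = 0 := by rw [← hh, this]; ext x; rfl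
    have hψc : ψ = uR ∘ₗ c := by
      have := sub_eq_zero.mp hθ0
      exact this
    apply LinearMap.ext
    intro k
    obtain ⟨x, rfl⟩ := hεs k
    have e1 : π (ψ x) = φ (ε x) := LinearMap.congr_fun hψ x
    rw [← e1, hψc]
    exact hπu (c x)
  -- surjectivity
  have surjRel : ∀ h, ∃ φ, Rel φ h := by
    intro h
    obtain ⟨⟨χ, hχ⟩, rfl⟩ := Submodule.mkQ_surjective _ h
    have hχd2 : χ ∘ₗ d2 = 0 := by rw [← hg2]; exact hχ
    have hfd2 : (uR ∘ₗ χ) ∘ₗ d2 = 0 := by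
      rw [LinearMap.comp_assoc, hχd2]; ext a; simp
    obtain ⟨ψ, hψd1⟩ := extend_lemma hepi d2 d1 ε hex1 hex0 hεs (uR ∘ₗ χ) hfd2
    obtain ⟨φ, hφ⟩ := factor_through_surj ε hεs (π ∘ₗ ψ) (by
      intro x hx
      rw [LinearMap.mem_ker] at hx ⊢
      obtain ⟨b, rfl⟩ := (hex0 x).1 hx
      have e1 : ψ (d1 b) = uR (χ b) := LinearMap.congr_fun hψd1 b
      simp only [LinearMap.comp_apply, e1]
      exact hπu (χ b))
    exact ⟨φ, ψ, χ, hχ, hφ.symm, hψd1.symm, rfl⟩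
  -- assemble
  choose δfun hδ using total
  have hadd : ∀ φ φ', δfun (φ + φ') = δfun φ + δfun φ' := fun φ φ' =>
    uniq _ _ _ (hδ (φ + φ')) (addRel _ _ _ _ (hδ φ) (hδ φ'))
  have hsmul : ∀ (r : R) φ, δfun (r • φ) = r • δfun φ := fun r φ =>
    uniq _ _ _ (hδ (r • φ)) (smulRel r _ _ (hδ φ))
  set δ : ((U ⧸ LinearMap.range (Algebra.linearMap R U)) →ₗ[R]
      (U ⧸ LinearMap.range (Algebra.linearMap R U))) →ₗ[R]
      (LinearMap.ker g2 ⧸ LinearMap.range tc) :=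
    { toFun := δfun, map_add' := hadd, map_smul' := hsmul } with hδdef
  have hbij : Function.Bijective δ := by
    constructor
    · rw [injective_iff_map_eq_zero]
      intro φ hφ0
      exact injRel φ (hφ0 ▸ hδ φ)
    · intro h
      obtain ⟨φ, hφ⟩ := surjRel h
      exact ⟨φ, uniq _ _ _ (hδ φ) hφ⟩
  exact ⟨LinearEquiv.ofBijective δ hbij⟩
end


/-- let `u : R → U` be an injective flat ring epimorphism of commutative
rings with cokernel `K = U/R`. Then `Hom_R(K, U) = 0` and `Ext¹_R(K, U) = 0`;
consequently the connecting map of `Hom_R(K, -)` applied to `0 → R → U → K → 0` gives an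
isomorphism `Hom_R(K, K) ≅ Ext¹_R(K, R)`. -/
theorem stmt8 {R : Type u} [CommRing R] {U : Type u} [CommRing U] [Algebra R U]
    [Module.Flat R U]
    (hinj : Function.Injective (algebraMap R U))
    (hepi : Function.Bijective (LinearMap.mul' R U)) :
    Subsingleton ((U ⧸ LinearMap.range (Algebra.linearMap R U)) →ₗ[R] U) ∧
    Subsingleton (ext1 R
      (ModuleCat.of R (U ⧸ LinearMap.range (Algebra.linearMap R U)))
      (ModuleCat.of R U)) ∧
    Nonempty
      (((U ⧸ LinearMap.range (Algebra.linearMap R U)) →ₗ[R]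
          (U ⧸ LinearMap.range (Algebra.linearMap R U))) ≃ₗ[R]
        ext1 R (ModuleCat.of R (U ⧸ LinearMap.range (Algebra.linearMap R U)))
          (ModuleCat.of R R)) := by
  classical
  have hHom : ∀ f : (U ⧸ LinearMap.range (Algebra.linearMap R U)) →ₗ[R] U, f = 0 :=
    homKU hepi
  have sub1 : Subsingleton ((U ⧸ LinearMap.range (Algebra.linearMap R U)) →ₗ[R] U) :=
    ⟨fun f g => by rw [hHom f, hHom g]⟩
  set Kc : ModuleCat.{u} R := ModuleCat.of R (U ⧸ LinearMap.range (Algebra.linearMap R U))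
    with hKc
  have P : ProjectiveResolution Kc := HasProjectiveResolution.out.some
  -- concrete exactness of the resolution
  have hsc1 : (P.complex.sc' 2 1 0).Exact :=
    (HomologicalComplex.exactAt_iff' P.complex 2 1 0 (by simp) (by simp)).1
      (P.complex_exactAt_succ 0)
  have hex1 : Function.Exact (P.complex.d 2 1).hom
      (P.complex.d 1 0).hom := by
    rw [LinearMap.exact_iff]
    exact ((P.complex.sc' 2 1 0).moduleCat_exact_iff_range_eq_ker.1 hsc1).symm
  have hex0 : Function.Exact (P.complex.d 1 0).hom
      (P.π.f 0).hom := by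
    rw [LinearMap.exact_iff]
    exact ((ShortComplex.mk _ _
      P.complex_d_comp_π_f_zero).moduleCat_exact_iff_range_eq_ker.1 P.exact₀).symm
  have hεs : Function.Surjective (P.π.f 0).hom :=
    (ModuleCat.epi_iff_surjective _).1 inferInstance
  -- vanishing of Ext¹(K, U)
  have hexU : ∀ (f : ↑(P.complex.X 1) →ₗ[R] U),
      f ∘ₗ (P.complex.d 2 1).hom = 0 →
      ∃ g : ↑(P.complex.X 0) →ₗ[R] U,
        g ∘ₗ (P.complex.d 1 0).hom = f := by
    intro f hf
    exact extend_lemma hepi _ _ (P.π.f 0).hom hex1 hex0 hεs f hf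
  have hLUex : (P.complex.linearYonedaObj R (ModuleCat.of R U)).ExactAt 1 := by
    rw [HomologicalComplex.exactAt_iff' _ 0 1 2 (by simp) (by simp),
      ShortComplex.moduleCat_exact_iff]
    intro x₂ hx₂
    obtain ⟨g, hg⟩ := hexU x₂.hom (by ext a; exact congrArg (fun φ => φ.hom a) hx₂)
    exact ⟨ModuleCat.ofHom g, by apply ModuleCat.hom_ext; exact hg⟩
  have hZ : Limits.IsZero ((P.complex.linearYonedaObj R (ModuleCat.of R U)).homology 1) :=
    (HomologicalComplex.exactAt_iff_isZero_homology _ 1).1 hLUex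
  have sub2 : Subsingleton (ext1 R Kc (ModuleCat.of R U)) :=
    subsingleton_of_isZero (Limits.IsZero.of_iso hZ (P.isoExt 1 (ModuleCat.of R U)))
  -- the connecting isomorphism
  set Rc : ModuleCat.{u} R := ModuleCat.of R R with hRc
  set LR := P.complex.linearYonedaObj R Rc with hLRdef
  set S := LR.sc' 0 1 2 with hSdef
  have eS : LR.homology 1 ≅ S.homology :=
    ShortComplex.homologyMapIso (LR.isoSc' 0 1 2 (by simp) (by simp))
  have eH : (ext1 R Kc Rc) ≃ₗ[R] ↑S.moduleCatLeftHomologyData.H :=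
    (P.isoExt 1 Rc ≪≫ eS ≪≫ S.moduleCatHomologyIso).toLinearEquiv
  have hproj : Module.Projective R ↑(P.complex.X 0) :=
    (IsProjective.iff_projective _).mpr (P.projective 0)
  obtain ⟨g2, tc, hg2, htc, ⟨eq⟩⟩ := transport_dual (P.complex.d 2 1).hom
    (P.complex.d 1 0).hom S.g.hom S.moduleCatToCycles ModuleCat.homLinearEquiv
    ModuleCat.homLinearEquiv ModuleCat.homLinearEquiv (fun φ => rfl) (fun ψ => rfl)
  obtain ⟨eδ⟩ := connecting hinj hepi
      (P.complex.d 2 1).hom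
      (P.complex.d 1 0).hom
      (P.π.f 0).hom
      hex1 hex0 hεs g2 tc hg2 htc
  exact ⟨sub1, sub2, ⟨(eδ.trans eq).trans eH.symm⟩⟩


end
end

section
/- Let u: R → U be a ring epimorphism, b: A → B and c: A → C be R-module homomorphisms such that C is a u-contramodule, Ker(b) is u-h-divisible (an epimorphic image of a direct sum of copies of U), and Coker(b) is a U-module. Then there exists a unique R-homomorphism f: B → C such that c = f ∘ b. -/
universe u

noncomputable section

open CategoryTheory in
lemma homZeroAux {R : Type*} [CommRing R] {U : Type*} [CommRing U] [Algebra R U]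
    {C D : Type*} [AddCommGroup C] [Module R C] [AddCommGroup D] [Module R D]
    [Module U D] [IsScalarTower R U D]
    (h : Subsingleton (U →ₗ[R] C)) (f : D →ₗ[R] C) (x : D) : f x = 0 := by
  let g : U →ₗ[R] C :=
    { toFun := fun t => f (t • x)
      map_add' := fun t t' => by simp [add_smul]
      map_smul' := fun r t => by simp [smul_assoc] }
  have hg : g = 0 := Subsingleton.elim _ _
  have h1 : g (1 : U) = 0 := by rw [hg]; rfl
  simpa [g] using h1

open CategoryTheory in
set_option maxHeartbeats 1000000 in
private lemma splitSurj {R : Type u} [CommRing R] {V C E : Type u} [AddCommGroup V] [Module R V]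
    [AddCommGroup C] [Module R C] [AddCommGroup E] [Module R E]
    (hExt : Subsingleton (ext1 R (ModuleCat.of R V) (ModuleCat.of R C)))
    (j : C →ₗ[R] E) (p : E →ₗ[R] V) (hj : Function.Injective j)
    (hker : LinearMap.ker p = LinearMap.range j) (hp : Function.Surjective p) :
    ∃ s : V →ₗ[R] E, p.comp s = LinearMap.id := by
  classical
  set Vm := ModuleCat.of R V
  set Cm := ModuleCat.of R C
  set Em := ModuleCat.of R E
  obtain ⟨P⟩ := (HasProjectiveResolution.out (Z := Vm))
  set L := P.complex.linearYonedaObj R Cm with hL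
  -- exactness of the Hom complex at 1
  have hsub : Subsingleton (L.homology 1) :=
    (((forget _).mapIso (P.isoExt (R := R) 1 Cm)).toEquiv).symm.subsingleton
  have hexact : L.ExactAt 1 :=
    (HomologicalComplex.exactAt_iff_isZero_homology _ _).mpr
      (ModuleCat.isZero_of_subsingleton _)
  have hexact' : (L.sc' 0 1 2).Exact :=
    (HomologicalComplex.exactAt_iff' _ 0 1 2 (by simp) (by simp)).1 hexact
  rw [ShortComplex.moduleCat_exact_iff] at hexact'
  -- the augmentation, as a linear map
  let π₀ : P.complex.X 0 ⟶ Vm :=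
    P.π.f 0 ≫ (HomologicalComplex.singleObjXSelf (ComplexShape.down ℕ) 0 Vm).hom
  let πL : ↑(P.complex.X 0) →ₗ[R] V := π₀.hom
  have hπ₀epi : Epi π₀ := epi_comp _ _
  have hπLsurj : Function.Surjective πL := (ModuleCat.epi_iff_surjective π₀).1 hπ₀epi
  let dL : ↑(P.complex.X 1) →ₗ[R] ↑(P.complex.X 0) := (P.complex.d 1 0).hom
  have hdπ : πL.comp dL = 0 := by
    have h : P.complex.d 1 0 ≫ π₀ = 0 := by
      show P.complex.d 1 0 ≫ (P.π.f 0 ≫ (HomologicalComplex.singleObjXSelf (ComplexShape.down ℕ) 0 Vm).hom) = 0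
      rw [← Category.assoc, P.complex_d_comp_π_f_zero, Limits.zero_comp]
    exact congrArg ModuleCat.Hom.hom h
  -- exactness of the resolution at 0
  have hex0 : ∀ x : ↑(P.complex.X 0), πL x = 0 → ∃ y : ↑(P.complex.X 1), dL y = x := by
    have h := P.exact₀
    rw [ShortComplex.moduleCat_exact_iff] at h
    intro x hx
    refine h x ?_
    have hinj : Function.Injective
        (HomologicalComplex.singleObjXSelf (ComplexShape.down ℕ) 0 Vm).hom :=
      (ModuleCat.mono_iff_injective _).1 inferInstance
    apply hinj
    have : (HomologicalComplex.singleObjXSelf (ComplexShape.down ℕ) 0 Vm).hom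
        ((P.π.f 0) x) = πL x := rfl
    rw [this, hx, map_zero]
  -- lift of π₀ along p
  have hpepi : Epi (ModuleCat.ofHom p : Em ⟶ Vm) := (ModuleCat.epi_iff_surjective _).2 hp
  let lam : P.complex.X 0 ⟶ Em := Projective.factorThru π₀ (ModuleCat.ofHom p)
  let lamL : ↑(P.complex.X 0) →ₗ[R] E := lam.hom
  have hlamp : p.comp lamL = πL := by
    show (lam ≫ ModuleCat.ofHom p).hom = πL
    rw [Projective.factorThru_comp]
  have hlamp' : ∀ x, p (lamL x) = πL x := fun x => LinearMap.congr_fun hlamp x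
  -- the iso C ≃ ker p
  have hmem : ∀ z : C, j z ∈ LinearMap.ker p := fun z => hker ▸ LinearMap.mem_range_self j z
  let jE : C ≃ₗ[R] LinearMap.ker p :=
    LinearEquiv.ofBijective (j.codRestrict (LinearMap.ker p) hmem)
      ⟨fun a b hab => hj (congrArg Subtype.val hab),
       fun x => by
        have hx2 : (x : E) ∈ LinearMap.range j := by rw [← hker]; exact x.2
        obtain ⟨z, hz⟩ := hx2
        exact ⟨z, Subtype.ext hz⟩⟩
  have hjEval : ∀ z : C, (jE z : E) = j z := fun z => rfl
  -- the cocycle φ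
  have hmem1 : ∀ x : ↑(P.complex.X 1), lamL (dL x) ∈ LinearMap.ker p := by
    intro x
    rw [LinearMap.mem_ker, hlamp' (dL x)]
    exact LinearMap.congr_fun hdπ x
  let φL : ↑(P.complex.X 1) →ₗ[R] C :=
    jE.symm.toLinearMap.comp ((lamL.comp dL).codRestrict (LinearMap.ker p) hmem1)
  let φ : P.complex.X 1 ⟶ Cm := ModuleCat.ofHom φL
  have hjφ : ∀ x, j (φL x) = lamL (dL x) := by
    intro x
    have h1 : jE (φL x) = (lamL.comp dL).codRestrict (LinearMap.ker p) hmem1 x :=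
      jE.apply_symm_apply _
    have := congrArg Subtype.val h1
    exact this
  let d21L : ↑(P.complex.X 2) →ₗ[R] ↑(P.complex.X 1) := (P.complex.d 2 1).hom
  have hdd : dL.comp d21L = 0 := by
    have h : P.complex.d 2 1 ≫ P.complex.d 1 0 = 0 := P.complex.d_comp_d 2 1 0
    exact congrArg ModuleCat.Hom.hom h
  have hcocycle : L.d 1 2 φ = 0 := by
    have hc : φL.comp d21L = 0 := by
      refine LinearMap.ext fun x => hj ?_
      rw [LinearMap.comp_apply, hjφ, LinearMap.zero_apply, map_zero]
      have h5 : dL (d21L x) = 0 := by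
        have h6 := LinearMap.congr_fun hdd x
        rw [LinearMap.comp_apply] at h6
        simpa using h6
      rw [h5, map_zero]
    show P.complex.d 2 1 ≫ φ = 0
    apply ModuleCat.hom_ext
    exact hc
  obtain ⟨ψ, hψ⟩ := hexact' φ hcocycle
  let ψL : ↑(P.complex.X 0) →ₗ[R] C := (ψ : P.complex.X 0 ⟶ Cm).hom
  have hψc : φL = ψL.comp dL := by
    have : P.complex.d 1 0 ≫ (ψ : P.complex.X 0 ⟶ Cm) = φ := hψ
    exact (congrArg ModuleCat.Hom.hom this).symm
  -- μ kills the image of d 1 0 hence ker π₀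
  let μ : ↑(P.complex.X 0) →ₗ[R] E := lamL - j.comp ψL
  have hμd : ∀ x : ↑(P.complex.X 1), μ (dL x) = 0 := by
    intro x
    have h1 : μ (dL x) = lamL (dL x) - j (ψL (dL x)) := rfl
    rw [h1, show ψL (dL x) = φL x from (LinearMap.congr_fun hψc x).symm, hjφ, sub_self]
  have hμker : LinearMap.ker πL ≤ LinearMap.ker μ := by
    intro x hx
    obtain ⟨y, rfl⟩ := hex0 x hx
    exact hμd y
  -- descend to σ : V → E
  let e0 := LinearMap.quotKerEquivOfSurjective πL hπLsurj
  let σ : V →ₗ[R] E := ((LinearMap.ker πL).liftQ μ hμker).comp e0.symm.toLinearMap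
  have hσπ : ∀ x : ↑(P.complex.X 0), σ (πL x) = μ x := by
    intro x
    have h1 : e0.symm (πL x) = Submodule.Quotient.mk x := by
      apply e0.injective
      rw [LinearEquiv.apply_symm_apply]
      rfl
    show ((LinearMap.ker πL).liftQ μ hμker) (e0.symm (πL x)) = μ x
    rw [h1]
    rfl
  refine ⟨σ, ?_⟩
  ext v
  obtain ⟨x, rfl⟩ := hπLsurj v
  rw [LinearMap.comp_apply, LinearMap.id_apply, hσπ]
  have h2 : μ x = lamL x - j (ψL x) := rfl
  rw [h2, map_sub, hlamp' x, show p (j (ψL x)) = 0 from hmem _, sub_zero]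

set_option maxHeartbeats 1000000 in
set_option synthInstance.maxHeartbeats 1000000 in
private lemma retractionAux {R U : Type u} [CommRing R] [CommRing U] [Algebra R U]
    {C E Q : Type u} [AddCommGroup C] [Module R C] [AddCommGroup E] [Module R E]
    [AddCommGroup Q] [Module R Q] [Module U Q] [IsScalarTower R U Q]
    (hC1 : Subsingleton (U →ₗ[R] C))
    (hC2 : Subsingleton (ext1 R (ModuleCat.of R U) (ModuleCat.of R C)))
    (j : C →ₗ[R] E) (p : E →ₗ[R] Q) (hj : Function.Injective j)
    (hker : LinearMap.ker p = LinearMap.range j) (hp : Function.Surjective p) :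
    ∃ ρ : E →ₗ[R] C, ρ.comp j = LinearMap.id := by
  classical
  -- free U-module surjecting onto Q
  let F : Type u := Q →₀ U
  let πU : F →ₗ[U] Q := Finsupp.linearCombination U (id : Q → Q)
  let π : F →ₗ[R] Q := πU.restrictScalars R
  have hπsurj : Function.Surjective π := by
    intro q
    refine ⟨Finsupp.single q 1, ?_⟩
    rw [show π (Finsupp.single q 1) = Finsupp.linearCombination U (id : Q → Q)
      (Finsupp.single q 1) from rfl, Finsupp.linearCombination_single, id_eq, one_smul]
  have hmemj : ∀ z : C, j z ∈ LinearMap.ker p := fun z =>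
    hker ▸ LinearMap.mem_range_self j z
  -- for each q : Q, a partial section of p over the copy of U indexed by q
  have hsq : ∀ q : Q, ∃ σq : U →ₗ[R] E, ∀ t : U, p (σq t) = π (Finsupp.single q t) := by
    intro q
    let g : U →ₗ[R] Q := π.comp (Finsupp.lsingle q)
    let Tq : (E × U) →ₗ[R] Q := p.comp (LinearMap.fst R E U) - g.comp (LinearMap.snd R E U)
    let Eq : Submodule R (E × U) := LinearMap.ker Tq
    let pq : Eq →ₗ[R] U := (LinearMap.snd R E U).comp Eq.subtype
    have hjqmem : ∀ z : C, ((j z, 0) : E × U) ∈ Eq := by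
      intro z
      have h1 : p (j z) = 0 := hmemj z
      simp [Eq, Tq, h1]
    let jq : C →ₗ[R] Eq := ((LinearMap.inl R E U).comp j).codRestrict Eq hjqmem
    have hjq : Function.Injective jq := by
      intro a b hab
      have h2 : ((jq a : E × U)).1 = ((jq b : E × U)).1 := by rw [hab]
      exact hj h2
    have hpqsurj : Function.Surjective pq := by
      intro t
      obtain ⟨e, he⟩ := hp (g t)
      exact ⟨⟨(e, t), by simp [Eq, Tq, he]⟩, rfl⟩
    have hkerq : LinearMap.ker pq = LinearMap.range jq := by
      apply le_antisymm
      · intro x hx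
        have hx1 : ((x : E × U).2 : U) = 0 := hx
        have hx2 : p (x : E × U).1 = 0 := by
          have hxT : Tq (x : E × U) = 0 := x.2
          have h3 : p (x : E × U).1 - g (x : E × U).2 = 0 := hxT
          rwa [hx1, map_zero, sub_zero] at h3
        have hx3 : (x : E × U).1 ∈ LinearMap.range j := hker ▸ hx2
        obtain ⟨z, hz⟩ := hx3
        refine ⟨z, Subtype.ext ?_⟩
        show ((j z, 0) : E × U) = (x : E × U)
        exact (Prod.ext_iff.mpr ⟨hz.symm, hx1⟩).symm
      · rintro x ⟨z, rfl⟩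
        rfl
    obtain ⟨s, hs⟩ := splitSurj hC2 jq pq hjq hkerq hpqsurj
    refine ⟨((LinearMap.fst R E U).comp Eq.subtype).comp s, fun t => ?_⟩
    have h5 : pq (s t) = t := LinearMap.congr_fun hs t
    have h6 : Tq ((s t) : E × U) = 0 := (s t).2
    have h7 : p ((s t) : E × U).1 - g ((s t) : E × U).2 = 0 := h6
    have h8 : ((s t) : E × U).2 = t := h5
    rw [h8] at h7
    exact sub_eq_zero.mp h7
  choose σ hσ using hsq
  -- assemble into λ : F → E with p ∘ λ = π
  let lam : F →ₗ[R] E := Finsupp.lsum ℕ σ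
  have hlam : ∀ y : F, p (lam y) = π y := by
    have hcomp : p.comp lam = π := by
      refine Finsupp.lhom_ext' fun q => ?_
      refine LinearMap.ext fun t => ?_
      show p (lam (Finsupp.single q t)) = π (Finsupp.single q t)
      have h1 : lam (Finsupp.single q t) = σ q t := Finsupp.lsum_single ℕ σ q t
      rw [h1, hσ q t]
    exact fun y => LinearMap.congr_fun hcomp y
  -- λ vanishes on ker π since that is a U-module
  let K : Submodule U F := LinearMap.ker πU
  let jE : C ≃ₗ[R] LinearMap.ker p :=
    LinearEquiv.ofBijective (j.codRestrict (LinearMap.ker p) hmemj)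
      ⟨fun a b hab => hj (congrArg Subtype.val hab),
       fun x => by
        have hx2 : (x : E) ∈ LinearMap.range j := by rw [← hker]; exact x.2
        obtain ⟨z, hz⟩ := hx2
        exact ⟨z, Subtype.ext hz⟩⟩
  have hlamK : ∀ k : F, k ∈ LinearMap.ker π → lam k = 0 := by
    intro k hk
    have hkK : k ∈ K := hk
    have hmem2 : ∀ x : K, lam ((K.subtype.restrictScalars R) x) ∈ LinearMap.ker p := by
      intro x
      rw [LinearMap.mem_ker, hlam]
      exact x.2
    let gg : K →ₗ[R] C := jE.symm.toLinearMap.comp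
      ((lam.comp (K.subtype.restrictScalars R)).codRestrict (LinearMap.ker p) hmem2)
    have hg : gg ⟨k, hkK⟩ = 0 := homZeroAux (U := U) (D := ↥K) hC1 gg ⟨k, hkK⟩
    have h1 : jE (gg ⟨k, hkK⟩) =
        (lam.comp (K.subtype.restrictScalars R)).codRestrict (LinearMap.ker p) hmem2 ⟨k, hkK⟩ :=
      jE.apply_symm_apply _
    rw [hg, map_zero] at h1
    have h2 := congrArg Subtype.val h1
    simpa using h2.symm
  -- descend λ to σQ : Q → E
  have hle : LinearMap.ker π ≤ LinearMap.ker lam := fun k hk => hlamK k hk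
  let e0 := LinearMap.quotKerEquivOfSurjective π hπsurj
  let σQ : Q →ₗ[R] E := ((LinearMap.ker π).liftQ lam hle).comp e0.symm.toLinearMap
  have hσQ : ∀ y : F, σQ (π y) = lam y := by
    intro y
    have h1 : e0.symm (π y) = Submodule.Quotient.mk y := by
      apply e0.injective
      rw [LinearEquiv.apply_symm_apply]
      rfl
    show ((LinearMap.ker π).liftQ lam hle) (e0.symm (π y)) = lam y
    rw [h1]
    rfl
  have hpσQ : ∀ q : Q, p (σQ q) = q := by
    intro q
    obtain ⟨y, rfl⟩ := hπsurj q
    rw [hσQ, hlam]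
  -- the retraction
  have hmem3 : ∀ e : E, e - σQ (p e) ∈ LinearMap.ker p := by
    intro e
    rw [LinearMap.mem_ker, map_sub, hpσQ, sub_self]
  let ρ : E →ₗ[R] C := jE.symm.toLinearMap.comp
    ((LinearMap.id - σQ.comp p).codRestrict (LinearMap.ker p) hmem3)
  refine ⟨ρ, ?_⟩
  ext z
  show jE.symm ((LinearMap.id - σQ.comp p).codRestrict (LinearMap.ker p) hmem3 (j z)) = z
  apply jE.injective
  rw [LinearEquiv.apply_symm_apply]
  apply Subtype.ext
  show j z - σQ (p (j z)) = (jE z : E)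
  rw [show p (j z) = 0 from hmemj z, map_zero, sub_zero]
  rfl

/-- let `u : R → U` be a ring epimorphism, `b : A → B` and `c : A → C`
`R`-module maps such that `C` is a `u`-contramodule, `Ker b` is `u`-h-divisible (an
epimorphic image of a direct sum of copies of `U`) and `Coker b` is a `U`-module. Then
there is a unique `R`-homomorphism `f : B → C` with `c = f ∘ b`. -/
theorem stmt11 {R : Type u} [CommRing R] {U : Type u} [CommRing U] [Algebra R U]
    (hepi : Function.Bijective (LinearMap.mul' R U))
    {A B C : Type u} [AddCommGroup A] [AddCommGroup B] [AddCommGroup C]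
    [Module R A] [Module R B] [Module R C]
    (b : A →ₗ[R] B) (c : A →ₗ[R] C)
    (hC : Subsingleton (U →ₗ[R] C) ∧
      Subsingleton (ext1 R (ModuleCat.of R U) (ModuleCat.of R C)))
    (hker : ∃ (ι : Type u) (g : (ι →₀ U) →ₗ[R] LinearMap.ker b), Function.Surjective g)
    [Module U (B ⧸ LinearMap.range b)] [IsScalarTower R U (B ⧸ LinearMap.range b)] :
    ∃! f : B →ₗ[R] C, c = f ∘ₗ b := by
  classical
  obtain ⟨hC1, hC2⟩ := hC
  -- c kills the kernel of b
  have hck : ∀ a : A, b a = 0 → c a = 0 := by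
    obtain ⟨ι, g, hg⟩ := hker
    intro a ha
    obtain ⟨y, hy⟩ := hg ⟨a, ha⟩
    have h0 : (c.comp ((LinearMap.ker b).subtype.comp g)) y = 0 :=
      homZeroAux (U := U) hC1 _ y
    rw [LinearMap.comp_apply, LinearMap.comp_apply, hy] at h0
    exact h0
  -- the pushout E0 of B and C along A
  let W : Submodule R (B × C) := LinearMap.range (b.prod (-c))
  let jE : C →ₗ[R] (B × C) ⧸ W := W.mkQ.comp (LinearMap.inr R B C)
  have hjE : Function.Injective jE := by
    intro z z' hzz
    have h1 : ((0, z) : B × C) - (0, z') ∈ W := (Submodule.Quotient.eq W).mp hzz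
    obtain ⟨a, ha⟩ := h1
    have hb : b a = 0 := by
      have := congrArg Prod.fst ha
      simpa using this
    have hc : -c a = z - z' := by
      have := congrArg Prod.snd ha
      simpa using this
    rw [hck a hb] at hc
    have := hc.symm
    rwa [neg_zero, sub_eq_zero] at this
  let pE : ((B × C) ⧸ W) →ₗ[R] (B ⧸ LinearMap.range b) := by
    refine W.liftQ ((LinearMap.range b).mkQ.comp (LinearMap.fst R B C)) ?_
    rintro x ⟨a, rfl⟩
    show (LinearMap.range b).mkQ (b a) = 0
    rw [Submodule.mkQ_apply, Submodule.Quotient.mk_eq_zero]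
    exact LinearMap.mem_range_self b a
  have hpE : Function.Surjective pE := by
    intro q
    obtain ⟨x, rfl⟩ := Submodule.mkQ_surjective _ q
    exact ⟨W.mkQ (x, 0), rfl⟩
  have hkerpE : LinearMap.ker pE = LinearMap.range jE := by
    apply le_antisymm
    · intro e he
      obtain ⟨xz, rfl⟩ := Submodule.mkQ_surjective W e
      obtain ⟨x, z⟩ := xz
      have h1 : (LinearMap.range b).mkQ x = 0 := he
      rw [Submodule.mkQ_apply, Submodule.Quotient.mk_eq_zero] at h1
      obtain ⟨a, ha⟩ := h1
      refine ⟨z + c a, ?_⟩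
      show W.mkQ (0, z + c a) = W.mkQ (x, z)
      rw [Submodule.mkQ_apply, Submodule.mkQ_apply, Submodule.Quotient.eq]
      refine ⟨-a, ?_⟩
      show (b (-a), -c (-a)) = ((0, z + c a) : B × C) - (x, z)
      rw [map_neg, map_neg, neg_neg, ha]
      show ((-x, c a) : B × C) = (0 - x, z + c a - z)
      rw [zero_sub, add_sub_cancel_left]
    · rintro e ⟨z, rfl⟩
      show (LinearMap.range b).mkQ ((0 : B)) = 0
      rw [Submodule.mkQ_apply, Submodule.Quotient.mk_eq_zero]
      exact Submodule.zero_mem _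
  obtain ⟨ρ, hρ⟩ := retractionAux (U := U) hC1 hC2 jE pE hjE hkerpE hpE
  let f : B →ₗ[R] C := ρ.comp (W.mkQ.comp (LinearMap.inl R B C))
  have hfb : c = f.comp b := by
    ext a
    have h1 : W.mkQ (b a, 0) = jE (c a) := by
      show W.mkQ (b a, 0) = W.mkQ (0, c a)
      rw [Submodule.mkQ_apply, Submodule.mkQ_apply, Submodule.Quotient.eq]
      exact ⟨a, by show (b a, -c a) = ((b a, 0) : B × C) - (0, c a); rw [Prod.mk_sub_mk, sub_zero, zero_sub]⟩
    show c a = ρ (W.mkQ (b a, 0))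
    rw [h1]
    exact (LinearMap.congr_fun hρ (c a)).symm
  refine ⟨f, hfb, ?_⟩
  intro f' hf'
  -- uniqueness
  have hdiff : ∀ x : B, x ∈ LinearMap.range b → (f' - f) x = 0 := by
    rintro x ⟨a, rfl⟩
    have h1 : f' (b a) = c a := (LinearMap.congr_fun hf' a).symm
    have h2 : f (b a) = c a := (LinearMap.congr_fun hfb a).symm
    show f' (b a) - f (b a) = 0
    rw [h1, h2, sub_self]
  let gbar : (B ⧸ LinearMap.range b) →ₗ[R] C :=
    (LinearMap.range b).liftQ (f' - f) hdiff
  have hgbar : ∀ t, gbar t = 0 := fun t => homZeroAux (U := U) hC1 gbar t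
  ext x
  have h3 : (f' - f) x = gbar ((LinearMap.range b).mkQ x) := rfl
  have h4 : (f' - f) x = 0 := by rw [h3, hgbar]
  have h5 : f' x - f x = 0 := h4
  exact sub_eq_zero.mp h5

end
end

section
/- Let u: R → U be a flat injective ring epimorphism of commutative rings with associated Gabriel topology G = {J : JU = U}. Then for every J ∈ G, every R/J-module M is a u-contramodule: Hom_R(U, M) = 0 = Ext^1_R(U, M). -/
universe u

noncomputable section

open CategoryTheory

/-- Auxiliary: a surjection onto `U` whose kernel is killed by `J` admits a linear section,
provided `J • U = U`. -/
private theorem aux_section {R U : Type u} [CommRing R] [CommRing U] [Algebra R U]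
    {J : Ideal R} (hJ : J • (⊤ : Submodule R U) = ⊤)
    {E : Type u} [AddCommGroup E] [Module R E]
    (π : E →ₗ[R] U) (hsurj : Function.Surjective π)
    (hker : ∀ j ∈ J, ∀ x : E, π x = 0 → j • x = 0) :
    ∃ σ : U →ₗ[R] E, ∀ u, π (σ u) = u := by
  classical
  set e := Function.surjInv hsurj with he
  have hπe : ∀ u, π (e u) = u := fun u => Function.surjInv_eq hsurj u
  have tau : ∀ j ∈ J, ∃ τ : U →ₗ[R] E, ∀ u, τ u = j • e u := by
    intro j hj
    refine ⟨{ toFun := fun u => j • e u, map_add' := ?_, map_smul' := ?_ }, fun u => rfl⟩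
    · intro u v
      have h0 : π (e (u + v) - (e u + e v)) = 0 := by simp [hπe]
      have h1 := hker j hj _ h0
      rw [smul_sub, smul_add, sub_eq_zero] at h1
      exact h1
    · intro r u
      have h0 : π (e (r • u) - r • e u) = 0 := by simp [hπe]
      have h1 := hker j hj _ h0
      rw [smul_sub, sub_eq_zero] at h1
      show j • e (r • u) = r • (j • e u)
      rw [h1, smul_comm]
  have main : ∀ x : U, x ∈ J • (⊤ : Submodule R U) →
      ∃ σ : U →ₗ[R] E, ∀ u, π (σ u) = x * u := by
    intro x hx
    refine Submodule.smul_induction_on hx ?_ ?_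
    · intro j hj v _
      obtain ⟨τ, hτ⟩ := tau j hj
      refine ⟨τ.comp (LinearMap.mulLeft R v), fun u => ?_⟩
      rw [LinearMap.comp_apply, LinearMap.mulLeft_apply, hτ, map_smul, hπe,
        smul_mul_assoc]
    · rintro x y ⟨σ₁, h₁⟩ ⟨σ₂, h₂⟩
      exact ⟨σ₁ + σ₂, fun u => by simp [h₁ u, h₂ u, add_mul]⟩
  obtain ⟨σ, hσ⟩ := main 1 (by rw [hJ]; exact Submodule.mem_top)
  exact ⟨σ, fun u => by simpa using hσ u⟩

/-- Auxiliary: if `J • U = U`, `JM = 0`, `ε : P → U` is surjective, then every map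
`ker ε → M` extends to `P`. -/
private theorem aux_extend {R U : Type u} [CommRing R] [CommRing U] [Algebra R U]
    {J : Ideal R} (hJ : J • (⊤ : Submodule R U) = ⊤)
    {P M : Type u} [AddCommGroup P] [Module R P] [AddCommGroup M] [Module R M]
    (hJM : ∀ r ∈ J, ∀ m : M, r • m = 0)
    (ε : P →ₗ[R] U) (hε : Function.Surjective ε)
    (g : LinearMap.ker ε →ₗ[R] M) :
    ∃ h : P →ₗ[R] M, ∀ k : LinearMap.ker ε, h (k : P) = g k := by
  classical
  let K := LinearMap.ker ε
  let n : K →ₗ[R] M × P := LinearMap.prod g (-(K.subtype))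
  let N := LinearMap.range n
  let mk : (M × P) →ₗ[R] (M × P) ⧸ N := N.mkQ
  have hNker : N ≤ LinearMap.ker (ε.comp (LinearMap.snd R M P)) := by
    rintro _ ⟨k, rfl⟩
    have : ε (k : P) = 0 := k.2
    simp [n, this]
  let πb : (M × P) ⧸ N →ₗ[R] U := N.liftQ (ε.comp (LinearMap.snd R M P)) hNker
  have hπb : ∀ (m : M) (p : P), πb (mk (m, p)) = ε p := fun m p => rfl
  have hsurj : Function.Surjective πb := by
    intro u
    obtain ⟨p, hp⟩ := hε u
    exact ⟨mk (0, p), by rw [hπb, hp]⟩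
  have hmkdiff : ∀ (m : M) (p : P) (hp : p ∈ K),
      mk (m, p) = mk (m + g ⟨p, hp⟩, 0) := by
    intro m p hp
    rw [Submodule.mkQ_apply, Submodule.mkQ_apply, Submodule.Quotient.eq]
    have hdiff : ((m, p) : M × P) - (m + g ⟨p, hp⟩, 0) = -(n ⟨p, hp⟩) := by
      simp [n, Prod.ext_iff]
    rw [hdiff]
    exact neg_mem (LinearMap.mem_range_self n _)
  have hkerform : ∀ x, πb x = 0 → ∃ m : M, x = mk (m, 0) := by
    intro x hx
    obtain ⟨⟨m, p⟩, rfl⟩ := N.mkQ_surjective x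
    have hp : p ∈ K := by
      have : ε p = 0 := by rw [← hπb m p]; exact hx
      exact this
    exact ⟨m + g ⟨p, hp⟩, hmkdiff m p hp⟩
  have hker : ∀ j ∈ J, ∀ x, πb x = 0 → j • x = 0 := by
    intro j hj x hx
    obtain ⟨m, rfl⟩ := hkerform x hx
    rw [← map_smul]
    have h1 : j • ((m, 0) : M × P) = 0 := by
      rw [Prod.smul_mk, hJM j hj m, smul_zero]
      rfl
    rw [h1, map_zero]
  obtain ⟨σ, hσ⟩ := aux_section hJ πb hsurj hker
  have huniq : ∀ m m' : M, mk (m, 0) = mk (m', 0) → m = m' := by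
    intro m m' hmm
    have h2 : mk (m - m', 0) = 0 := by
      rw [show ((m - m', 0) : M × P) = (m, 0) - (m', 0) by simp, map_sub, hmm, sub_self]
    rw [Submodule.mkQ_apply, Submodule.Quotient.mk_eq_zero] at h2
    obtain ⟨k, hk⟩ := h2
    have hk2 : -(k : P) = 0 := congrArg Prod.snd hk
    have hk0 : k = 0 := by
      ext
      exact neg_eq_zero.mp hk2
    rw [hk0, map_zero] at hk
    have := congrArg Prod.fst hk
    simpa [sub_eq_zero] using this.symm
  let φ : P →ₗ[R] (M × P) ⧸ N := mk.comp (LinearMap.inr R M P) - σ.comp ε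
  have hφ : ∀ p : P, φ p = mk (0, p) - σ (ε p) := fun p => rfl
  have hker2 : ∀ p : P, πb (φ p) = 0 := by
    intro p
    rw [hφ, map_sub, hπb, hσ, sub_self]
  let h0 : P → M := fun p => Classical.choose (hkerform _ (hker2 p))
  have hh0 : ∀ p, φ p = mk (h0 p, 0) := fun p => Classical.choose_spec (hkerform _ (hker2 p))
  let h : P →ₗ[R] M :=
    { toFun := h0
      map_add' := fun p q => by
        refine huniq _ _ ?_
        rw [← hh0, map_add, hh0 p, hh0 q, ← map_add, Prod.mk_add_mk, add_zero]
      map_smul' := fun r p => by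
        refine huniq _ _ ?_
        rw [RingHom.id_apply, ← hh0, map_smul, hh0 p, ← map_smul, Prod.smul_mk, smul_zero] }
  refine ⟨h, fun k => ?_⟩
  have hφk : φ (k : P) = mk (0, (k : P)) := by
    have : ε (k : P) = 0 := k.2
    rw [hφ, this, map_zero, sub_zero]
  have hmk : mk (0, (k : P)) = mk (g k, 0) := by
    have := hmkdiff 0 (k : P) k.2
    rw [this, zero_add]
  refine huniq _ _ ?_
  rw [show (h (k : P) : M) = h0 (k : P) from rfl, ← hh0, hφk, hmk]

theorem subsingleton_of_iso {R' : Type*} [CommRing R'] {X Y : ModuleCat.{u} R'} (e : X ≅ Y)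
    (h : Subsingleton Y) : Subsingleton X := by
  constructor
  intro a b
  have h1 : e.hom a = e.hom b := Subsingleton.elim _ _
  calc a = e.inv (e.hom a) := (e.hom_inv_id_apply a).symm
    _ = e.inv (e.hom b) := by rw [h1]
    _ = b := e.hom_inv_id_apply b

/-- let `u : R → U` be a flat injective ring epimorphism of commutative
rings with associated Gabriel topology `𝒢 = {J : JU = U}`. For every `J ∈ 𝒢`, every
`R`-module `M` annihilated by `J` (i.e. every `R/J`-module) is a `u`-contramodule:
`Hom_R(U, M) = 0 = Ext¹_R(U, M)`. -/
theorem stmt12 {R : Type u} [CommRing R] {U : Type u} [CommRing U] [Algebra R U]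
    [Module.Flat R U]
    (hinj : Function.Injective (algebraMap R U))
    (hepi : Function.Bijective (LinearMap.mul' R U))
    (J : Ideal R) (hJ : J • (⊤ : Submodule R U) = ⊤)
    (M : Type u) [AddCommGroup M] [Module R M]
    (hJM : ∀ r ∈ J, ∀ m : M, r • m = 0) :
    Subsingleton (U →ₗ[R] M) ∧
      Subsingleton (ext1 R (ModuleCat.of R U) (ModuleCat.of R M)) := by
  have homzero : ∀ f : U →ₗ[R] M, f = 0 := by
    intro f
    ext u
    have hu : u ∈ J • (⊤ : Submodule R U) := by rw [hJ]; exact Submodule.mem_top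
    refine Submodule.smul_induction_on hu ?_ ?_
    · intro j hj v _
      simp only [map_smul, LinearMap.zero_apply, smul_zero]
      exact hJM j hj _
    · intro x y hx hy
      simp only [map_add, LinearMap.zero_apply] at *
      rw [hx, hy, add_zero]
  constructor
  · exact ⟨fun f g => by rw [homzero f, homzero g]⟩
  · set Uo := ModuleCat.of R U with hUo
    set Mo := ModuleCat.of R M with hMo
    let P := ProjectiveResolution.of Uo
    refine subsingleton_of_iso (P.isoExt 1 Mo) ?_
    set K := P.complex.linearYonedaObj R Mo with hKdef
    have hexact : K.ExactAt 1 := by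
      rw [HomologicalComplex.exactAt_iff' _ 0 1 2 (by simp) (by simp),
        ShortComplex.moduleCat_exact_iff]
      intro f₀ hf
      -- `f : P.complex.X 1 ⟶ Mo` with `P.complex.d 2 1 ≫ f = 0`
      let f : P.complex.X 1 ⟶ Mo := f₀
      have hf' : P.complex.d 2 1 ≫ f = 0 := hf
      let fl : ↑(P.complex.X 1) →ₗ[R] M := f.hom
      -- the augmentation map
      let ε : P.complex.X 0 ⟶ Uo := P.π.f 0
      have hεsurj : Function.Surjective ε :=
        (ModuleCat.epi_iff_surjective (P.π.f 0)).mp inferInstance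
      have hex0 := (ShortComplex.moduleCat_exact_iff _).mp P.exact₀
      have hex1 := (ShortComplex.moduleCat_exact_iff _).mp (P.exact_succ 0)
      -- d10 lands in ker ε
      have hd10ker : ∀ y : P.complex.X 1, ε (P.complex.d 1 0 y) = 0 := by
        intro y
        have := P.complex_d_comp_π_f_zero
        change (P.complex.d 1 0 ≫ P.π.f 0) y = 0
        rw [this]
        rfl
      -- f is constant on fibers of d10
      have hfconst : ∀ y y' : P.complex.X 1,
          P.complex.d 1 0 y = P.complex.d 1 0 y' → fl y = fl y' := by
        intro y y' hyy
        have h0 : P.complex.d 1 0 (y - y') = 0 := by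
          rw [map_sub, hyy, sub_self]
        obtain ⟨z, hz⟩ := hex1 (y - y') h0
        have hsub : fl (y - y') = 0 := by
          rw [← hz]
          calc fl (P.complex.d 2 1 z) = (P.complex.d 2 1 ≫ f) z := rfl
            _ = (0 : P.complex.X 2 ⟶ Mo) z := by rw [hf']
            _ = 0 := rfl
        rw [map_sub, sub_eq_zero] at hsub
        exact hsub
      -- every element of ker ε is of the form d10 y
      have hpre : ∀ k : LinearMap.ker ε.hom,
          ∃ y, P.complex.d 1 0 y = (k : P.complex.X 0) := by
        intro k
        exact hex0 (k : P.complex.X 0) k.2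
      let g0 : LinearMap.ker ε.hom → M :=
        fun k => fl (Classical.choose (hpre k))
      have hg0 : ∀ (k : LinearMap.ker ε.hom) (y : P.complex.X 1),
          P.complex.d 1 0 y = (k : P.complex.X 0) → g0 k = fl y := by
        intro k y hy
        exact hfconst _ _ ((Classical.choose_spec (hpre k)).trans hy.symm)
      let g : LinearMap.ker ε.hom →ₗ[R] M :=
        { toFun := g0
          map_add' := by
            intro k k'
            show g0 (k + k') = g0 k + g0 k'
            obtain ⟨y, hy⟩ := hpre k
            obtain ⟨y', hy'⟩ := hpre k'
            rw [hg0 k y hy, hg0 k' y' hy', ← map_add,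
              hg0 (k + k') (y + y') (by rw [map_add, hy, hy']; rfl)]
          map_smul' := by
            intro r k
            show g0 (r • k) = r • g0 k
            obtain ⟨y, hy⟩ := hpre k
            rw [hg0 k y hy, ← map_smul,
              hg0 (r • k) (r • y) (by rw [map_smul, hy]; rfl)] }
      obtain ⟨h, hh⟩ := aux_extend hJ hJM ε.hom hεsurj g
      refine ⟨(ModuleCat.ofHom h : P.complex.X 0 ⟶ Mo), ?_⟩
      have hfinal : ∀ y : P.complex.X 1, h (P.complex.d 1 0 y) = fl y := by
        intro y
        have hmem : P.complex.d 1 0 y ∈ LinearMap.ker ε.hom :=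
          hd10ker y
        have h1 : h (P.complex.d 1 0 y) = g ⟨P.complex.d 1 0 y, hmem⟩ := hh ⟨_, hmem⟩
        rw [h1]
        exact hg0 _ y rfl
      show P.complex.d 1 0 ≫ (ModuleCat.ofHom h : P.complex.X 0 ⟶ Mo) = f
      exact ModuleCat.hom_ext (LinearMap.ext fun y => hfinal y)
    have hzero := (HomologicalComplex.exactAt_iff_isZero_homology _ 1).mp hexact
    have hid : (𝟙 (K.homology 1)) = 0 := hzero.eq_of_src _ _
    constructor
    intro a b
    have hz : ∀ x : ↑(K.homology 1), (0 : K.homology 1 ⟶ K.homology 1) x = 0 :=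
      fun x => LinearMap.zero_apply x
    calc a = (𝟙 (K.homology 1)) a := rfl
      _ = (0 : K.homology 1 ⟶ K.homology 1) a := by rw [hid]
      _ = (0 : ↑(K.homology 1)) := hz a
      _ = (0 : K.homology 1 ⟶ K.homology 1) b := (hz b).symm
      _ = (𝟙 (K.homology 1)) b := by rw [hid]
      _ = b := rfl

end
end
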